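/- The anisotropic perimeter generating function B(x,y) of bargraphs satisfies B = yB + xy + xB + xyB + xB^2, and consequently B(x,y) = (1 - x - y - xy - sqrt((1-y)((1-x)^2 - y(1+x)^2)))/(2x) as a formal power series. -/

import Mathlib

/-- Half the vertical perimeter of a bargraph whose column heights follow the
previous column of height `prev`: `h₁ + Σ_{i≥2} max(hᵢ - hᵢ₋₁, 0)`
(truncated subtraction on `ℕ`). -/
def vhalf : ℕ → List ℕ → ℕ
  | _, [] => 0
  | prev, h :: t => (h - prev) + vhalf h t

/-- The anisotropic perimeter generating function `B(x,y)` of bargraphs: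
a bargraph is a nonempty list of positive column heights, `x = X 0` marks half the
horizontal perimeter (the width) and `y = X 1` marks half the vertical perimeter. -/
noncomputable def bargraphGF : MvPowerSeries (Fin 2) ℚ :=
  fun d => (Set.ncard {l : List ℕ | l ≠ [] ∧ (∀ x ∈ l, 0 < x) ∧
    l.length = d 0 ∧ vhalf 0 l = d 1} : ℚ)

def bar (m v : ℕ) : Set (List ℕ) :=
  {l : List ℕ | l ≠ [] ∧ (∀ x ∈ l, 0 < x) ∧ l.length = m ∧ vhalf 0 l = v}

noncomputable def Ncount (m v : ℕ) : ℕ := (bar m v).ncard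

lemma vhalf_map_succ : ∀ (l : List ℕ) (p : ℕ), vhalf (p + 1) (l.map (· + 1)) = vhalf p l
  | [], _ => rfl
  | h :: t, p => by
    simp only [List.map_cons, vhalf, vhalf_map_succ t h, Nat.succ_sub_succ]

lemma vhalf_map_zero (l : List ℕ) (hl : l ≠ []) :
    vhalf 0 (l.map (· + 1)) = vhalf 0 l + 1 := by
  cases l with
  | nil => simp at hl
  | cons h t =>
    simp only [List.map_cons, vhalf, vhalf_map_succ]
    omega

def lastd (p : ℕ) : List ℕ → ℕ
  | [] => p
  | h :: t => lastd h t

lemma vhalf_append : ∀ (a : List ℕ) (p : ℕ) (c : List ℕ),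
    vhalf p (a ++ c) = vhalf p a + vhalf (lastd p a) c
  | [], p, c => by simp [vhalf, lastd]
  | h :: t, p, c => by
    show vhalf p ((h :: t) ++ c) = vhalf p (h :: t) + vhalf (lastd h t) c
    rw [List.cons_append]
    show (h - p) + vhalf h (t ++ c) = ((h - p) + vhalf h t) + vhalf (lastd h t) c
    rw [vhalf_append t h c, Nat.add_assoc]

lemma lastd_mem : ∀ (l : List ℕ) (p : ℕ), l ≠ [] → lastd p l ∈ l
  | [], _, h => absurd rfl h
  | h :: t, p, _ => by
    cases t with
    | nil => simp [lastd]
    | cons h2 t2 =>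
      simpa [lastd] using List.mem_cons_of_mem _ (lastd_mem (h2 :: t2) h (by simp))

lemma vhalf_one_eq (t : List ℕ) (ht : t ≠ []) (hp : ∀ x ∈ t, 0 < x) :
    vhalf 0 t = vhalf 1 t + 1 := by
  cases t with
  | nil => simp at ht
  | cons k t' =>
    have : 0 < k := hp k (by simp)
    simp only [vhalf]
    omega

lemma exists_split : ∀ (l : List ℕ), 1 ∈ l → ∃ b t, l = b ++ 1 :: t ∧ 1 ∉ b
  | [], hm => by simp at hm
  | h :: t, hm => by
    by_cases h1 : h = 1
    · exact ⟨[], t, by simp [h1], by simp⟩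
    · have hmt : 1 ∈ t := by
        rcases List.mem_cons.mp hm with h' | h'
        · omega
        · exact h'
      obtain ⟨b, t', he, hn⟩ := exists_split t hmt
      exact ⟨h :: b, t', by simp [he], by
        simp only [List.mem_cons, not_or]
        exact ⟨fun hc => h1 hc.symm, hn⟩⟩

lemma split_unique : ∀ (b b' t t' : List ℕ), b ++ 1 :: t = b' ++ 1 :: t' →
    1 ∉ b → 1 ∉ b' → b = b' ∧ t = t'
  | [], [], t, t', he, _, _ => by simpa using he
  | [], h' :: b2, t, t', he, _, hb' => by
    simp only [List.nil_append, List.cons_append, List.cons.injEq] at he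
    exact absurd (List.mem_cons_self (a := 1) (l := b2)) (he.1 ▸ hb')
  | h :: b2, [], t, t', he, hb, _ => by
    simp only [List.nil_append, List.cons_append, List.cons.injEq] at he
    exact absurd (he.1 ▸ List.mem_cons_self (a := 1) (l := b2)) hb
  | h :: b2, h' :: b2', t, t', he, hb, hb' => by
    simp only [List.cons_append, List.cons.injEq] at he
    obtain ⟨rfl, he2⟩ := he
    obtain ⟨he3, he4⟩ := split_unique b2 b2' t t' he2
      (fun hc => hb (List.mem_cons_of_mem _ hc)) (fun hc => hb' (List.mem_cons_of_mem _ hc))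
    exact ⟨by rw [he3], he4⟩

lemma map_sub_add : ∀ (l : List ℕ), (∀ x ∈ l, 2 ≤ x) → (l.map (· - 1)).map (· + 1) = l
  | [], _ => rfl
  | h :: t, hl => by
    have h2 : 2 ≤ h := hl h (by simp)
    simp only [List.map_cons, map_sub_add t (fun x hx => hl x (List.mem_cons_of_mem _ hx))]
    congr 1
    omega

lemma le_vhalf : ∀ (l : List ℕ) (p x : ℕ), x ∈ l → x ≤ p + vhalf p l
  | [], _, _, hx => by simp at hx
  | h :: t, p, x, hx => by
    rcases List.mem_cons.mp hx with rfl | hx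
    · simp only [vhalf]; omega
    · have := le_vhalf t h x hx
      simp only [vhalf]; omega

lemma finite_len : ∀ (m b : ℕ), {l : List ℕ | l.length = m ∧ ∀ x ∈ l, x < b}.Finite
  | 0, b => (Set.finite_singleton ([] : List ℕ)).subset (by
      rintro l ⟨hl, -⟩
      simp [List.length_eq_zero_iff.mp hl])
  | (m + 1), b => by
    have ih := finite_len m b
    refine (((Set.finite_Iio b).prod ih).image (fun p : ℕ × List ℕ => p.1 :: p.2)).subset ?_
    rintro l ⟨hl, hb⟩
    cases l with
    | nil => simp at hl
    | cons h t =>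
      simp only [List.length_cons, Nat.succ.injEq] at hl
      exact ⟨(h, t), ⟨hb h (by simp), hl, fun x hx => hb x (by simp [hx])⟩, rfl⟩

lemma bar_finite (m v : ℕ) : (bar m v).Finite := by
  apply (finite_len m (v + 1)).subset
  rintro l ⟨h1, h2, h3, h4⟩
  exact ⟨h3, fun x hx => by have := le_vhalf l 0 x hx; omega⟩

lemma Ncount_zero_left (v : ℕ) : Ncount 0 v = 0 := by
  have : bar 0 v = ∅ := by
    rw [Set.eq_empty_iff_forall_notMem]
    rintro l ⟨h1, h2, h3, h4⟩
    exact h1 (List.length_eq_zero_iff.mp h3)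
  simp [Ncount, this]

lemma Ncount_zero_right (m : ℕ) : Ncount m 0 = 0 := by
  have : bar m 0 = ∅ := by
    rw [Set.eq_empty_iff_forall_notMem]
    rintro l ⟨h1, h2, h3, h4⟩
    cases l with
    | nil => exact h1 rfl
    | cons h t =>
      have : 0 < h := h2 h (by simp)
      simp only [vhalf] at h4
      omega
  simp [Ncount, this]

lemma ncard_sprod {α β : Type*} (s : Set α) (t : Set β) :
    (s ×ˢ t).ncard = s.ncard * t.ncard := by
  rw [← Nat.card_coe_set_eq, ← Nat.card_coe_set_eq, ← Nat.card_coe_set_eq,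
    Nat.card_congr (Equiv.Set.prod s t), Nat.card_prod]

lemma ncard_biUnion {α β : Type*} (s : Finset β) (F : β → Set α)
    (hfin : ∀ b ∈ s, (F b).Finite)
    (hdis : ∀ b ∈ s, ∀ c ∈ s, b ≠ c → Disjoint (F b) (F c)) :
    (⋃ b ∈ s, F b).ncard = ∑ b ∈ s, (F b).ncard := by
  classical
  induction s using Finset.induction_on with
  | empty => simp
  | @insert a s ha ih =>
    rw [Finset.sum_insert ha]
    have hu : (⋃ b ∈ insert a s, F b) = F a ∪ ⋃ b ∈ s, F b := by
      simp [Set.biUnion_insert]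
    rw [hu, Set.ncard_union_eq ?_ (hfin a (Finset.mem_insert_self a s)) ?_,
      ih (fun b hb => hfin b (Finset.mem_insert_of_mem hb))
        (fun b hb c hc hbc => hdis b (Finset.mem_insert_of_mem hb) c
          (Finset.mem_insert_of_mem hc) hbc)]
    · rw [Set.disjoint_iUnion_right]
      intro i
      rw [Set.disjoint_iUnion_right]
      intro hi
      exact hdis a (Finset.mem_insert_self a s) i (Finset.mem_insert_of_mem hi)
        (fun hc => ha (hc ▸ hi))
    · exact Set.Finite.biUnion s.finite_toSet (fun b hb => hfin b (Finset.mem_insert_of_mem hb))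

lemma succ_inj' : Function.Injective (· + 1 : ℕ → ℕ) := add_left_injective 1

lemma hnotone (c : List ℕ) (hc : ∀ x ∈ c, 0 < x) : 1 ∉ c.map (· + 1) := by
  intro hm
  obtain ⟨x, hx, hx1⟩ := List.mem_map.mp hm
  have := hc x hx
  omega

lemma N_rec (m v : ℕ) :
    Ncount (m+1) (v+1) = Ncount (m+1) v + (if m = 0 ∧ v = 0 then 1 else 0)
      + Ncount m (v+1) + Ncount m v
      + ∑ p ∈ Finset.HasAntidiagonal.antidiagonal m ×ˢ Finset.HasAntidiagonal.antidiagonal (v+1),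
          Ncount p.1.1 p.2.1 * Ncount p.1.2 p.2.2 := by
  classical
  set S : Finset ((ℕ × ℕ) × ℕ × ℕ) := Finset.HasAntidiagonal.antidiagonal m ×ˢ Finset.HasAntidiagonal.antidiagonal (v+1)
    with hSdef
  set T1 : Set (List ℕ) := (fun l : List ℕ => l.map (· + 1)) '' bar (m+1) v with hT1def
  set T2 : Set (List ℕ) := {l : List ℕ | l ∈ bar (m+1) (v+1) ∧ l = [1]} with hT2def
  set T3 : Set (List ℕ) := (fun t : List ℕ => 1 :: t) '' bar m (v+1) with hT3def
  set T4 : Set (List ℕ) := (fun c : List ℕ => c.map (· + 1) ++ [1]) '' bar m v with hT4def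
  set F : (ℕ × ℕ) × ℕ × ℕ → Set (List ℕ) := fun p =>
    (fun ct : List ℕ × List ℕ => ct.1.map (· + 1) ++ 1 :: ct.2) ''
      (bar p.1.1 p.2.1 ×ˢ bar p.1.2 p.2.2) with hFdef
  set T5 : Set (List ℕ) := ⋃ p ∈ S, F p with hT5def
  -- shape lemmas
  have hs2 : ∀ l ∈ T2, l = [1] := fun l hl => hl.2
  have hs3 : ∀ l ∈ T3, ∃ t, t ≠ [] ∧ l = 1 :: t := by
    rintro l ⟨t, ⟨tne, -, -, -⟩, rfl⟩
    exact ⟨t, tne, rfl⟩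
  have hs4 : ∀ l ∈ T4, ∃ b, b ≠ [] ∧ 1 ∉ b ∧ l = b ++ [1] := by
    rintro l ⟨c, ⟨cne, cpos, -, -⟩, rfl⟩
    exact ⟨c.map (· + 1), by simpa using cne, hnotone c cpos, rfl⟩
  have hs5 : ∀ l ∈ T5, ∃ b t, b ≠ [] ∧ t ≠ [] ∧ 1 ∉ b ∧ l = b ++ 1 :: t := by
    intro l hl
    simp only [hT5def, Set.mem_iUnion] at hl
    obtain ⟨p, hp, hl⟩ := hl
    obtain ⟨⟨c, t⟩, ⟨⟨cne, cpos, -, -⟩, tne, tpos, -, -⟩, rfl⟩ := hl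
    exact ⟨c.map (· + 1), t, by simpa using cne, tne, hnotone c cpos, rfl⟩
  -- subset lemmas
  have hsub1 : T1 ⊆ bar (m+1) (v+1) := by
    rintro l ⟨c, ⟨cne, cpos, clen, cv⟩, rfl⟩
    refine ⟨by simpa using cne, ?_, by simpa using clen, ?_⟩
    · intro x hx
      obtain ⟨y, hy, rfl⟩ := List.mem_map.mp hx
      exact Nat.succ_pos y
    · rw [vhalf_map_zero c cne, cv]
  have hsub2 : T2 ⊆ bar (m+1) (v+1) := fun l hl => hl.1
  have hsub3 : T3 ⊆ bar (m+1) (v+1) := by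
    rintro l ⟨t, ⟨tne, tpos, tlen, tv⟩, rfl⟩
    refine ⟨by simp, ?_, by simp [tlen], ?_⟩
    · intro x hx
      rcases List.mem_cons.mp hx with rfl | hx
      · omega
      · exact tpos x hx
    · show (1 - 0) + vhalf 1 t = v + 1
      have := vhalf_one_eq t tne tpos
      omega
  have hsub4 : T4 ⊆ bar (m+1) (v+1) := by
    rintro l ⟨c, ⟨cne, cpos, clen, cv⟩, rfl⟩
    have hlast : 2 ≤ lastd 0 (c.map (· + 1)) := by
      obtain ⟨y, hy, hyy⟩ := List.mem_map.mp (lastd_mem (c.map (· + 1)) 0 (by simpa using cne))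
      have := cpos y hy
      omega
    refine ⟨by simp, ?_, by simp [clen], ?_⟩
    · intro x hx
      rcases List.mem_append.mp hx with hx | hx
      · obtain ⟨y, hy, rfl⟩ := List.mem_map.mp hx
        exact Nat.succ_pos y
      · simp only [List.mem_singleton] at hx
        omega
    · rw [vhalf_append, vhalf_map_zero c cne, cv]
      show v + 1 + ((1 - lastd 0 (c.map (· + 1))) + vhalf 1 []) = v + 1
      have h0 : vhalf 1 ([] : List ℕ) = 0 := rfl
      omega
  have hsub5 : T5 ⊆ bar (m+1) (v+1) := by
    intro l hl
    simp only [hT5def, Set.mem_iUnion] at hl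
    obtain ⟨p, hp, hl⟩ := hl
    obtain ⟨⟨c, t⟩, ⟨⟨cne, cpos, clen, cv⟩, tne, tpos, tlen, tv⟩, rfl⟩ := hl
    have hpm := Finset.mem_product.mp hp
    have hm1 : p.1.1 + p.1.2 = m := Finset.HasAntidiagonal.mem_antidiagonal.mp hpm.1
    have hv1 : p.2.1 + p.2.2 = v + 1 := Finset.HasAntidiagonal.mem_antidiagonal.mp hpm.2
    have hlast : 2 ≤ lastd 0 (c.map (· + 1)) := by
      obtain ⟨y, hy, hyy⟩ := List.mem_map.mp (lastd_mem (c.map (· + 1)) 0 (by simpa using cne))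
      have := cpos y hy
      omega
    refine ⟨by simp, ?_, ?_, ?_⟩
    · intro x hx
      rcases List.mem_append.mp hx with hx | hx
      · obtain ⟨y, hy, hyx⟩ := List.mem_map.mp hx
        omega
      · rcases List.mem_cons.mp hx with rfl | hx
        · omega
        · exact tpos x hx
    · simp only [List.length_append, List.length_map, List.length_cons, clen, tlen]
      omega
    · have h8 : vhalf 0 t = p.2.2 := tv
      have h9 := vhalf_one_eq t tne tpos
      rw [vhalf_append, vhalf_map_zero c cne, cv]
      show p.2.1 + 1 + ((1 - lastd 0 (c.map (· + 1))) + vhalf 1 t) = v + 1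
      omega
  -- cover
  have hcover : bar (m+1) (v+1) = T1 ∪ (T2 ∪ (T3 ∪ (T4 ∪ T5))) := by
    apply Set.Subset.antisymm
    · intro l hl
      obtain ⟨hne, hpos, hlen, hv⟩ := hl
      by_cases hone : 1 ∈ l
      · obtain ⟨b, t, he, hnb⟩ := exists_split l hone
        subst he
        have hb2 : ∀ x ∈ b, 2 ≤ x := by
          intro x hx
          have h1 := hpos x (List.mem_append.mpr (Or.inl hx))
          have h2 : x ≠ 1 := fun hc => hnb (hc ▸ hx)
          omega
        cases b with
        | nil =>
          cases t with
          | nil =>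
            exact Or.inr (Or.inl ⟨⟨hne, hpos, hlen, hv⟩, rfl⟩)
          | cons th tt =>
            refine Or.inr (Or.inr (Or.inl ?_))
            have tne : th :: tt ≠ [] := by simp
            have tpos : ∀ x ∈ th :: tt, 0 < x := fun x hx => hpos x (by simp [hx])
            have tlen : (th :: tt).length = m := by simpa using hlen
            have tv : vhalf 0 (th :: tt) = v + 1 := by
              have h1 : vhalf 0 ([] ++ 1 :: th :: tt) = (1 - 0) + vhalf 1 (th :: tt) := rfl
              have h2 := vhalf_one_eq (th :: tt) tne tpos
              omega
            exact ⟨th :: tt, ⟨tne, tpos, tlen, tv⟩, rfl⟩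
        | cons bh bt =>
          have bne : bh :: bt ≠ [] := by simp
          have hmapc : ((bh :: bt).map (· - 1)).map (· + 1) = bh :: bt := map_sub_add _ hb2
          have cne : (bh :: bt).map (· - 1) ≠ [] := by simp
          have cpos : ∀ x ∈ (bh :: bt).map (· - 1), 0 < x := by
            intro x hx
            obtain ⟨y, hy, hyx⟩ := List.mem_map.mp hx
            have := hb2 y hy
            omega
          have hvb := vhalf_map_zero _ cne
          rw [hmapc] at hvb
          have hlastb : 2 ≤ lastd 0 (bh :: bt) := hb2 _ (lastd_mem _ 0 bne)
          have hsplit : vhalf 0 ((bh :: bt) ++ 1 :: t) =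
              vhalf 0 (bh :: bt) + ((1 - lastd 0 (bh :: bt)) + vhalf 1 t) := by
            rw [vhalf_append]
            rfl
          have hclen : ((bh :: bt).map (· - 1)).length = (bh :: bt).length := by simp
          cases t with
          | nil =>
            refine Or.inr (Or.inr (Or.inr (Or.inl ?_)))
            refine ⟨(bh :: bt).map (· - 1), ⟨cne, cpos, ?_, ?_⟩, by simp only [hmapc]⟩
            · have : (bh :: bt).length + 1 = m + 1 := by simpa using hlen
              omega
            · have h0 : vhalf 1 ([] : List ℕ) = 0 := rfl
              omega
          | cons th tt =>
            refine Or.inr (Or.inr (Or.inr (Or.inr ?_)))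
            have tne : th :: tt ≠ [] := by simp
            have tpos : ∀ x ∈ th :: tt, 0 < x := fun x hx => hpos x (by simp [hx])
            simp only [hT5def, Set.mem_iUnion]
            refine ⟨((((bh :: bt).map (· - 1)).length, (th :: tt).length),
              (vhalf 0 ((bh :: bt).map (· - 1)), vhalf 0 (th :: tt))), ?_, ?_⟩
            · rw [hSdef]
              refine Finset.mem_product.mpr ⟨Finset.HasAntidiagonal.mem_antidiagonal.mpr ?_,
                Finset.HasAntidiagonal.mem_antidiagonal.mpr ?_⟩
              · show ((bh :: bt).map (· - 1)).length + (th :: tt).length = m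
                have hlen' := hlen
                simp only [List.length_append, List.length_cons] at hlen'
                simp only [List.length_map, List.length_cons]
                omega
              · show vhalf 0 ((bh :: bt).map (· - 1)) + vhalf 0 (th :: tt) = v + 1
                have h2 := vhalf_one_eq (th :: tt) tne tpos
                omega
            · exact ⟨((bh :: bt).map (· - 1), th :: tt),
                ⟨⟨cne, cpos, rfl, rfl⟩, tne, tpos, rfl, rfl⟩, by simp only [hmapc]⟩
      · -- no 1 in l
        left
        have hb2 : ∀ x ∈ l, 2 ≤ x := by
          intro x hx
          have h1 := hpos x hx
          have h2 : x ≠ 1 := fun hc => hone (hc ▸ hx)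
          omega
        have hmapc : (l.map (· - 1)).map (· + 1) = l := map_sub_add _ hb2
        have cne : l.map (· - 1) ≠ [] := by simpa using hne
        have cpos : ∀ x ∈ l.map (· - 1), 0 < x := by
          intro x hx
          obtain ⟨y, hy, rfl⟩ := List.mem_map.mp hx
          have := hb2 y hy
          omega
        have hvb := vhalf_map_zero _ cne
        rw [hmapc] at hvb
        exact ⟨l.map (· - 1), ⟨cne, cpos, by simpa using hlen, by omega⟩, hmapc⟩
    · intro l hl
      rcases hl with h | h | h | h | h
      exacts [hsub1 h, hsub2 h, hsub3 h, hsub4 h, hsub5 h]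
  -- finiteness
  have hfF : ∀ p ∈ S, (F p).Finite := fun p _ =>
    (((bar_finite _ _).prod (bar_finite _ _)).image _)
  have hf1 : T1.Finite := (bar_finite _ _).image _
  have hf2 : T2.Finite := (bar_finite (m+1) (v+1)).subset hsub2
  have hf3 : T3.Finite := (bar_finite _ _).image _
  have hf4 : T4.Finite := (bar_finite _ _).image _
  have hf5 : T5.Finite := Set.Finite.biUnion S.finite_toSet hfF
  -- disjointness
  have hone2 : ∀ l ∈ T2 ∪ (T3 ∪ (T4 ∪ T5)), (1 : ℕ) ∈ l := by
    intro l hl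
    rcases hl with h | h | h | h
    · rw [hs2 l h]; simp
    · obtain ⟨t, -, rfl⟩ := hs3 l h; simp
    · obtain ⟨b, -, -, rfl⟩ := hs4 l h; simp
    · obtain ⟨b, t, -, -, -, rfl⟩ := hs5 l h; simp
  have hd1 : Disjoint T1 (T2 ∪ (T3 ∪ (T4 ∪ T5))) := by
    rw [Set.disjoint_left]
    rintro l ⟨c, ⟨cne, cpos, -, -⟩, rfl⟩ hl2
    exact hnotone c cpos (hone2 _ hl2)
  have hd2 : Disjoint T2 (T3 ∪ (T4 ∪ T5)) := by
    rw [Set.disjoint_left]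
    intro l hl2 hrest
    have h1 := hs2 l hl2
    subst h1
    rcases hrest with h | h | h
    · obtain ⟨t, tne, ht⟩ := hs3 _ h
      simp only [List.cons.injEq] at ht
      exact tne ht.2.symm
    · obtain ⟨b, bne, -, hb⟩ := hs4 _ h
      have h6 := congrArg List.length hb
      rw [List.length_append] at h6
      have h8 : ([1] : List ℕ).length = 1 := rfl
      have h7 := List.length_pos_iff.mpr bne
      omega
    · obtain ⟨b, t, bne, -, -, hb⟩ := hs5 _ h
      have h6 := congrArg List.length hb
      rw [List.length_append] at h6
      have h8 : ([1] : List ℕ).length = 1 := rfl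
      have h9 : (1 :: t).length = t.length + 1 := rfl
      have h7 := List.length_pos_iff.mpr bne
      omega
  have hd3 : Disjoint T3 (T4 ∪ T5) := by
    rw [Set.disjoint_left]
    intro l hl3 hrest
    obtain ⟨t, tne, rfl⟩ := hs3 _ hl3
    have : ∃ b : List ℕ, b ≠ [] ∧ 1 ∉ b ∧ ∃ r, 1 :: t = b ++ r := by
      rcases hrest with h | h
      · obtain ⟨b, bne, bno, hb⟩ := hs4 _ h
        exact ⟨b, bne, bno, [1], hb⟩
      · obtain ⟨b, t', bne, -, bno, hb⟩ := hs5 _ h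
        exact ⟨b, bne, bno, 1 :: t', hb⟩
    obtain ⟨b, bne, bno, r, hb⟩ := this
    cases b with
    | nil => exact bne rfl
    | cons b0 bs =>
      simp only [List.cons_append, List.cons.injEq] at hb
      exact bno (hb.1 ▸ List.mem_cons_self)
  have hd45 : Disjoint T4 T5 := by
    rw [Set.disjoint_left]
    intro l hl4 hl5
    obtain ⟨b, bne, bno, rfl⟩ := hs4 _ hl4
    obtain ⟨b', t', bne', tne', bno', hb⟩ := hs5 _ hl5
    have h1 : b ++ 1 :: [] = b' ++ 1 :: t' := by simpa using hb
    obtain ⟨-, h2⟩ := split_unique b b' [] t' h1 bno bno'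
    exact tne' h2.symm
  have hdF : ∀ p ∈ S, ∀ q ∈ S, p ≠ q → Disjoint (F p) (F q) := by
    intro p hp q hq hpq
    rw [Set.disjoint_left]
    rintro l ⟨⟨c, t⟩, ⟨⟨cne, cpos, clen, cv⟩, tne, tpos, tlen, tv⟩, rfl⟩
      ⟨⟨c', t'⟩, ⟨⟨cne', cpos', clen', cv'⟩, tne', tpos', tlen', tv'⟩, heq⟩
    simp only at heq
    obtain ⟨h1, h2⟩ := split_unique _ _ _ _ heq (hnotone c' cpos') (hnotone c cpos)
    have hc : c' = c := List.map_injective_iff.mpr succ_inj' h1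
    subst hc
    subst h2
    refine hpq ?_
    obtain ⟨⟨a1, a2⟩, a3, a4⟩ := p
    obtain ⟨⟨b1, b2⟩, b3, b4⟩ := q
    simp only at clen cv tlen tv clen' cv' tlen' tv'
    simp only [Prod.mk.injEq]
    omega
  -- cardinalities
  have hc1 : T1.ncard = Ncount (m+1) v :=
    Set.ncard_image_of_injective _ (List.map_injective_iff.mpr succ_inj')
  have hc2 : T2.ncard = if m = 0 ∧ v = 0 then 1 else 0 := by
    by_cases h : m = 0 ∧ v = 0
    · obtain ⟨rfl, rfl⟩ := h
      have hT2 : T2 = {[1]} := by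
        apply Set.Subset.antisymm
        · intro l hl
          exact hl.2
        · intro l hl
          rw [Set.mem_singleton_iff] at hl
          subst hl
          exact ⟨⟨by simp, by simp, by simp, rfl⟩, rfl⟩
      rw [hT2, if_pos ⟨rfl, rfl⟩, Set.ncard_singleton]
    · have hT2 : T2 = ∅ := by
        rw [Set.eq_empty_iff_forall_notMem]
        rintro l ⟨⟨hne, hpos, hlen, hv⟩, rfl⟩
        have h1 : (1 : ℕ) = m + 1 := by simpa using hlen
        have h2 : vhalf 0 [1] = 1 := rfl
        exact h ⟨by omega, by omega⟩
      rw [hT2, if_neg h, Set.ncard_empty]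
  have hc3 : T3.ncard = Ncount m (v+1) :=
    Set.ncard_image_of_injective _ (List.cons_injective)
  have hc4 : T4.ncard = Ncount m v := by
    refine Set.ncard_image_of_injective _ ?_
    intro a b hab
    simp only at hab
    exact List.map_injective_iff.mpr succ_inj' (List.append_left_injective [1] hab)
  have hc5 : T5.ncard = ∑ p ∈ S, Ncount p.1.1 p.2.1 * Ncount p.1.2 p.2.2 := by
    rw [hT5def, ncard_biUnion S F hfF hdF]
    refine Finset.sum_congr rfl fun p hp => ?_
    rw [hFdef]
    have hinj : Set.InjOn (fun ct : List ℕ × List ℕ => ct.1.map (· + 1) ++ 1 :: ct.2)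
        (bar p.1.1 p.2.1 ×ˢ bar p.1.2 p.2.2) := by
      rintro ⟨c, t⟩ ⟨⟨-, cpos, -, -⟩, -, -, -, -⟩ ⟨c', t'⟩ ⟨⟨-, cpos', -, -⟩, -, -, -, -⟩ heq
      simp only at heq
      obtain ⟨h1, h2⟩ := split_unique _ _ _ _ heq (hnotone c cpos) (hnotone c' cpos')
      have hc : c = c' := List.map_injective_iff.mpr succ_inj' h1
      simp [hc, h2]
    rw [Set.ncard_image_of_injOn hinj, ncard_sprod]
    rfl
  -- put it together
  have hcard : Ncount (m+1) (v+1) = T1.ncard + (T2.ncard + (T3.ncard + (T4.ncard + T5.ncard))) := by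
    rw [Ncount, hcover,
      Set.ncard_union_eq hd1 hf1 (hf2.union (hf3.union (hf4.union hf5))),
      Set.ncard_union_eq hd2 hf2 (hf3.union (hf4.union hf5)),
      Set.ncard_union_eq hd3 hf3 (hf4.union hf5),
      Set.ncard_union_eq hd45 hf4 hf5]
  rw [hcard, hc1, hc2, hc3, hc4, hc5]
  ring

lemma coeff_X_mul' (s : Fin 2) (φ : MvPowerSeries (Fin 2) ℚ) (d : Fin 2 →₀ ℕ) :
    MvPowerSeries.coeff d (MvPowerSeries.X s * φ) =
      if 1 ≤ d s then MvPowerSeries.coeff (d - Finsupp.single s 1) φ else 0 := by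
  classical
  rw [MvPowerSeries.X_def, MvPowerSeries.coeff_monomial_mul]
  simp only [Finsupp.single_le_iff, one_mul]

lemma X0X1mono : (MvPowerSeries.X 0 * MvPowerSeries.X 1 : MvPowerSeries (Fin 2) ℚ)
    = MvPowerSeries.monomial (Finsupp.single 0 1 + Finsupp.single 1 1) 1 := by
  rw [MvPowerSeries.X_def, MvPowerSeries.X_def, MvPowerSeries.monomial_mul_monomial, one_mul]

lemma fin2_repr (f : Fin 2 →₀ ℕ) :
    Finsupp.single 0 (f 0) + Finsupp.single 1 (f 1) = f := by
  ext i
  fin_cases i <;> simp [Finsupp.add_apply, Finsupp.single_apply]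

lemma fin2_eq_iff (d : Fin 2 →₀ ℕ) :
    d = Finsupp.single 0 1 + Finsupp.single 1 1 ↔ d 0 = 1 ∧ d 1 = 1 := by
  constructor
  · rintro rfl
    simp [Finsupp.add_apply, Finsupp.single_apply]
  · rintro ⟨h0, h1⟩
    rw [← fin2_repr d, h0, h1]

lemma fin2_le_iff (d : Fin 2 →₀ ℕ) :
    Finsupp.single (0 : Fin 2) 1 + Finsupp.single 1 1 ≤ d ↔ 1 ≤ d 0 ∧ 1 ≤ d 1 := by
  rw [Finsupp.le_def]
  constructor
  · intro h
    constructor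
    · have := h 0
      simpa [Finsupp.add_apply, Finsupp.single_apply] using this
    · have := h 1
      simpa [Finsupp.add_apply, Finsupp.single_apply] using this
  · rintro ⟨h0, h1⟩ i
    fin_cases i <;> simp [Finsupp.add_apply, Finsupp.single_apply] <;> omega

lemma sum_antidiag_eq (n : Fin 2 →₀ ℕ) :
    ∑ p ∈ Finset.HasAntidiagonal.antidiagonal n, ((Ncount (p.1 0) (p.1 1) * Ncount (p.2 0) (p.2 1) : ℕ) : ℚ)
      = ∑ p ∈ Finset.HasAntidiagonal.antidiagonal (n 0) ×ˢ Finset.HasAntidiagonal.antidiagonal (n 1),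
          ((Ncount p.1.1 p.2.1 * Ncount p.1.2 p.2.2 : ℕ) : ℚ) := by
  refine Finset.sum_nbij' (i := fun p => ((p.1 0, p.2 0), (p.1 1, p.2 1)))
    (j := fun q => (Finsupp.single 0 q.1.1 + Finsupp.single 1 q.2.1,
      Finsupp.single 0 q.1.2 + Finsupp.single 1 q.2.2)) ?_ ?_ ?_ ?_ ?_
  · intro p hp
    rw [Finset.HasAntidiagonal.mem_antidiagonal] at hp
    have h0 : p.1 0 + p.2 0 = n 0 := by
      rw [← hp]; simp [Finsupp.add_apply]
    have h1 : p.1 1 + p.2 1 = n 1 := by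
      rw [← hp]; simp [Finsupp.add_apply]
    exact Finset.mem_product.mpr
      ⟨Finset.HasAntidiagonal.mem_antidiagonal.mpr h0, Finset.HasAntidiagonal.mem_antidiagonal.mpr h1⟩
  · intro q hq
    have h0 := Finset.HasAntidiagonal.mem_antidiagonal.mp (Finset.mem_product.mp hq).1
    have h1 := Finset.HasAntidiagonal.mem_antidiagonal.mp (Finset.mem_product.mp hq).2
    rw [Finset.HasAntidiagonal.mem_antidiagonal]
    ext i
    fin_cases i <;>
      simp only [Finsupp.add_apply, Finsupp.coe_add, Pi.add_apply, Finsupp.single_apply] <;>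
      simp <;> omega
  · intro p hp
    exact Prod.ext (fin2_repr p.1) (fin2_repr p.2)
  · intro q hq
    obtain ⟨⟨a, b⟩, c, e⟩ := q
    simp [Finsupp.add_apply, Finsupp.single_apply]
  · intro p hp
    rfl


open MvPowerSeries in
/-- `B = yB + xy + xB + xyB + xB²`, and consequently
`B(x,y) = (1 - x - y - xy - √((1-y)((1-x)² - y(1+x)²)))/(2x)`,
i.e. `(2xB - (1-x-y-xy))² = (1-y)((1-x)² - y(1+x)²)`. -/
theorem bargraph_perimeter_gf :
    (bargraphGF = X 1 * bargraphGF + X 0 * X 1 + X 0 * bargraphGF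
        + X 0 * X 1 * bargraphGF + X 0 * bargraphGF ^ 2) ∧
    (2 * X 0 * bargraphGF - (1 - X 0 - X 1 - X 0 * X 1)) ^ 2
      = (1 - X 1) * ((1 - X 0) ^ 2 - X 1 * (1 + X 0) ^ 2) := by
  classical
  have hB : ∀ d : Fin 2 →₀ ℕ, (MvPowerSeries.coeff d) bargraphGF
      = ((Ncount (d 0) (d 1) : ℕ) : ℚ) := fun d => rfl
  have h1 : bargraphGF = X 1 * bargraphGF + X 0 * X 1 + X 0 * bargraphGF
      + X 0 * X 1 * bargraphGF + X 0 * bargraphGF ^ 2 := by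
    ext d
    have hsub10 : (d - Finsupp.single 1 1 : Fin 2 →₀ ℕ) 0 = d 0 := by
      rw [Finsupp.tsub_apply]
      simp [Finsupp.single_apply]
    have hsub11 : (d - Finsupp.single 1 1 : Fin 2 →₀ ℕ) 1 = d 1 - 1 := by
      rw [Finsupp.tsub_apply]
      simp [Finsupp.single_apply]
    have hsub00 : (d - Finsupp.single 0 1 : Fin 2 →₀ ℕ) 0 = d 0 - 1 := by
      rw [Finsupp.tsub_apply]
      simp [Finsupp.single_apply]
    have hsub01 : (d - Finsupp.single 0 1 : Fin 2 →₀ ℕ) 1 = d 1 := by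
      rw [Finsupp.tsub_apply]
      simp [Finsupp.single_apply]
    have hd20 : (d - (Finsupp.single 0 1 + Finsupp.single 1 1) : Fin 2 →₀ ℕ) 0 = d 0 - 1 := by
      rw [Finsupp.tsub_apply]
      simp [Finsupp.add_apply, Finsupp.single_apply]
    have hd21 : (d - (Finsupp.single 0 1 + Finsupp.single 1 1) : Fin 2 →₀ ℕ) 1 = d 1 - 1 := by
      rw [Finsupp.tsub_apply]
      simp [Finsupp.add_apply, Finsupp.single_apply]
    have e1 : MvPowerSeries.coeff d (X 1 * bargraphGF)
        = if 1 ≤ d 1 then ((Ncount (d 0) (d 1 - 1) : ℕ) : ℚ) else 0 := by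
      rw [coeff_X_mul', hB, hsub10, hsub11]
    have e2 : MvPowerSeries.coeff d (X 0 * X 1 : MvPowerSeries (Fin 2) ℚ)
        = if d 0 = 1 ∧ d 1 = 1 then 1 else 0 := by
      rw [X0X1mono, MvPowerSeries.coeff_monomial]
      simp only [fin2_eq_iff]
    have e3 : MvPowerSeries.coeff d (X 0 * bargraphGF)
        = if 1 ≤ d 0 then ((Ncount (d 0 - 1) (d 1) : ℕ) : ℚ) else 0 := by
      rw [coeff_X_mul', hB, hsub00, hsub01]
    have e4 : MvPowerSeries.coeff d (X 0 * X 1 * bargraphGF)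
        = if 1 ≤ d 0 ∧ 1 ≤ d 1 then ((Ncount (d 0 - 1) (d 1 - 1) : ℕ) : ℚ) else 0 := by
      rw [X0X1mono, MvPowerSeries.coeff_monomial_mul, hB, hd20, hd21]
      simp only [fin2_le_iff, one_mul]
    have e5 : MvPowerSeries.coeff d (X 0 * bargraphGF ^ 2)
        = if 1 ≤ d 0 then
            ∑ p ∈ Finset.HasAntidiagonal.antidiagonal (d 0 - 1) ×ˢ Finset.HasAntidiagonal.antidiagonal (d 1),
              ((Ncount p.1.1 p.2.1 * Ncount p.1.2 p.2.2 : ℕ) : ℚ)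
          else 0 := by
      rw [pow_two, coeff_X_mul']
      by_cases h : 1 ≤ d 0
      · rw [if_pos h, if_pos h, MvPowerSeries.coeff_mul]
        have hs := sum_antidiag_eq (d - Finsupp.single 0 1)
        rw [hsub00, hsub01] at hs
        rw [← hs]
        refine Finset.sum_congr rfl fun p hp => ?_
        rw [hB, hB, Nat.cast_mul]
      · rw [if_neg h, if_neg h]
    rw [map_add, map_add, map_add, map_add, e1, e2, e3, e4, e5, hB d]
    generalize d 0 = m at *
    generalize d 1 = v at *
    rcases m with _ | a
    · simp [Ncount_zero_left]
    · rcases v with _ | b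
      · have hz : ∀ p ∈ Finset.HasAntidiagonal.antidiagonal a ×ˢ Finset.HasAntidiagonal.antidiagonal 0,
            ((Ncount p.1.1 p.2.1 * Ncount p.1.2 p.2.2 : ℕ) : ℚ) = 0 := by
          intro p hp
          have h2 := Finset.HasAntidiagonal.mem_antidiagonal.mp (Finset.mem_product.mp hp).2
          have : p.2.2 = 0 := by omega
          rw [this, Ncount_zero_right]
          simp
        simp only [Nat.add_sub_cancel]
        rw [Finset.sum_eq_zero hz]
        simp [Ncount_zero_right]
      · have hiff : (a + 1 = 1 ∧ b + 1 = 1) ↔ (a = 0 ∧ b = 0) := by omega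
        rw [if_pos (by omega : 1 ≤ b + 1), if_pos (by omega : 1 ≤ a + 1),
          if_pos (⟨by omega, by omega⟩ : 1 ≤ a + 1 ∧ 1 ≤ b + 1),
          if_pos (by omega : 1 ≤ a + 1)]
        simp only [Nat.add_sub_cancel, hiff]
        rw [N_rec a b]
        push_cast
        ring
  refine ⟨h1, ?_⟩
  linear_combination (-(4 : MvPowerSeries (Fin 2) ℚ) * X 0) * h1
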